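/- arXiv:2202.13107 — 6 statements merged into one kernel-verified Lean document; each statement's English description precedes it below -/
import Mathlib

section
/- Let R > 0 be a real number and y a complex number with |y| < R. Then | |R + y| − R − Re(y) | ≤ |y|² / (R − |y|). -/
theorem stmt_0 (R : ℝ) (hR : 0 < R) (y : ℂ) (hy : ‖y‖ < R) :
    |‖(R : ℂ) + y‖ - R - y.re| ≤ (‖y‖) ^ 2 / (R - ‖y‖) := by
  set a := ‖(R : ℂ) + y‖ with ha
  have h1 : a ^ 2 = (R + y.re) ^ 2 + y.im ^ 2 := by
    rw [ha, Complex.sq_norm, Complex.normSq_apply]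
    simp
    ring
  have hre : |y.re| ≤ ‖y‖ := Complex.abs_re_le_norm y
  have him2 : y.im ^ 2 ≤ (‖y‖) ^ 2 := by
    have := Complex.sq_norm y
    rw [Complex.normSq_apply] at this
    nlinarith [sq_nonneg y.re]
  have htri : ‖(R : ℂ) + y‖ ≥ ‖(R : ℂ)‖ - ‖y‖ := by
    have := norm_add_le ((R : ℂ) + y) (-y)
    simp [Real.norm_eq_abs] at this
    rw [Complex.norm_real, Real.norm_eq_abs]
    linarith
  have hRabs : ‖(R : ℂ)‖ = R := by
    rw [Complex.norm_real, Real.norm_eq_abs, abs_of_pos hR]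
  rw [hRabs] at htri
  have hpos : 0 < R - ‖y‖ := by linarith
  have hBpos : 0 < R + y.re := by
    have : -y.re ≤ |y.re| := neg_le_abs y.re
    linarith
  have hab : 0 ≤ a - (R + y.re) := by
    nlinarith [sq_nonneg y.im]
  rw [abs_of_nonneg (by linarith), le_div_iff₀ hpos]
  nlinarith [sq_nonneg y.im]
end

section
/- Let T be the piecewise rotation with T(z) = e^{iα}(z − C_j) + C_j for z ∈ P_j, and set N = 2|sin(α/2)| max(|C₀|,|C₁|). For any z = R e^{iθ} with R > N, writing j for the index with z ∈ P_j and g(θ) = −2|C_j| sin(α/2) sin(θ + α/2 − c_j) (where C_j = |C_j| e^{i c_j}), one has | |T(z)| − |z| − g(θ) | ≤ N² / (|z| − N). -/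
open Complex

lemma key_est (w d : ℂ) (R N g : ℝ) (hw : ‖w‖ = R) (hd : ‖d‖ ≤ N)
    (hR : N < R) (hN : 0 ≤ N) (hg : (d * (starRingEnd ℂ) w).re = R * g) :
    |‖w + d‖ - R - g| ≤ N ^ 2 / (R - N) := by
  have hR0 : 0 < R := lt_of_le_of_lt hN hR
  have hgle : |g| ≤ ‖d‖ := by
    have h1 : |(d * (starRingEnd ℂ) w).re| ≤ ‖d‖ * R := by
      calc |(d * (starRingEnd ℂ) w).re| ≤ ‖d * (starRingEnd ℂ) w‖ :=
            Complex.abs_re_le_norm _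
        _ = ‖d‖ * R := by simp [norm_mul, hw]
    rw [hg, abs_mul, _root_.abs_of_pos hR0] at h1
    nlinarith [h1, hR0]
  have hre : (w * (starRingEnd ℂ) d).re = (d * (starRingEnd ℂ) w).re := by
    simp [Complex.mul_re]; ring
  have hsq : (‖w + d‖) ^ 2 = R ^ 2 + 2 * (R * g) + (‖d‖) ^ 2 := by
    rw [Complex.sq_norm, Complex.normSq_add, hre, hg, ← Complex.sq_norm w, ← Complex.sq_norm d, hw]
    ring
  set A := ‖w + d‖ with hA
  set B := R + g with hB
  have hA0 : 0 ≤ A := norm_nonneg _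
  have hA1 : R - N ≤ A := by
    have h2 : ‖w‖ ≤ ‖w + d‖ + ‖d‖ := by
      calc ‖w‖ = ‖(w + d) + (-d)‖ := by rw [add_neg_cancel_right]
        _ ≤ ‖w + d‖ + ‖-d‖ := norm_add_le _ _
        _ = ‖w + d‖ + ‖d‖ := by rw [norm_neg]
    rw [hw] at h2; linarith
  have hB1 : R - N ≤ B := by
    have h3 : -(‖d‖) ≤ g := by linarith [hgle, neg_abs_le g]
    simp only [hB]; linarith
  have hB0 : 0 ≤ B := by linarith
  have hsqdiff : A ^ 2 - B ^ 2 = (‖d‖) ^ 2 - g ^ 2 := by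
    rw [hsq]; ring
  have hg2 : g ^ 2 ≤ (‖d‖) ^ 2 := by
    rw [← _root_.sq_abs g]
    exact pow_le_pow_left₀ (abs_nonneg g) hgle 2
  have hAB : B ≤ A := by nlinarith
  rw [show A - R - g = A - B by rw [hB]; ring, _root_.abs_of_nonneg (by linarith : (0:ℝ) ≤ A - B),
    le_div_iff₀ (by linarith : (0:ℝ) < R - N)]
  nlinarith [hsqdiff, hA1, hB1, hd, hg2, norm_nonneg d]

theorem stmt_5 (α : ℝ) (C : Fin 2 → ℂ) (P : Fin 2 → Set ℂ) (T : ℂ → ℂ)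
    (hdisj : Disjoint (P 0) (P 1)) (hcover : P 0 ∪ P 1 = Set.univ)
    (hT : ∀ (j : Fin 2), ∀ z ∈ P j, T z = Complex.exp (α * Complex.I) * (z - C j) + C j)
    (N : ℝ) (hN : N = 2 * |Real.sin (α / 2)| * max ‖C 0‖ ‖C 1‖)
    (R θ : ℝ) (hR : N < R) (z : ℂ) (hz : z = (R : ℂ) * Complex.exp (θ * Complex.I))
    (j : Fin 2) (hj : z ∈ P j) :
    |‖T z‖ - ‖z‖ -
        (-2 * ‖C j‖ * Real.sin (α / 2) *
          Real.sin (θ + α / 2 - Complex.arg (C j)))| ≤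
      N ^ 2 / (‖z‖ - N) := by
  have hN0 : 0 ≤ N := by rw [hN]; positivity
  have hR0 : 0 < R := lt_of_le_of_lt hN0 hR
  have hrmax : ‖C j‖ ≤ max ‖C 0‖ ‖C 1‖ := by
    fin_cases j
    · exact le_max_left _ _
    · exact le_max_right _ _
  set r := ‖C j‖ with hrdef
  set φ := Complex.arg (C j) with hφdef
  have hC : C j = (r : ℂ) * Complex.exp (φ * Complex.I) :=
    (Complex.norm_mul_exp_arg_mul_I _).symm
  have hzabs : ‖z‖ = R := by
    rw [hz]; simp [norm_mul, Complex.norm_real, Complex.norm_exp_ofReal_mul_I,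
      _root_.abs_of_pos hR0]
  set E := Complex.exp (↑α * Complex.I) with hE
  set w := E * z with hw
  set d := C j - E * C j with hd
  have hTz : T z = w + d := by rw [hT j z hj, hw, hd]; ring
  have hwabs : ‖w‖ = R := by
    rw [hw, norm_mul, hE, Complex.norm_exp_ofReal_mul_I, one_mul, hzabs]
  have hcosα : Real.cos α = 1 - 2 * Real.sin (α / 2) ^ 2 := by
    have h2 := Real.cos_two_mul (α / 2)
    have h3 := Real.sin_sq_add_cos_sq (α / 2)
    rw [show (2:ℝ) * (α / 2) = α by ring] at h2; linarith
  have habs1E : ‖1 - E‖ = 2 * |Real.sin (α / 2)| := by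
    have h1 : (‖1 - E‖) ^ 2 = (2 * |Real.sin (α / 2)|) ^ 2 := by
      rw [Complex.sq_norm, Complex.normSq_apply]
      simp only [Complex.sub_re, Complex.sub_im, Complex.one_re, Complex.one_im, hE,
        Complex.exp_ofReal_mul_I_re, Complex.exp_ofReal_mul_I_im]
      have h2 := Real.sin_sq_add_cos_sq α
      rw [mul_pow, _root_.sq_abs]
      nlinarith [hcosα]
    have h4 : ‖1 - E‖ = Real.sqrt ((2 * |Real.sin (α / 2)|) ^ 2) := by
      rw [← h1, Real.sqrt_sq (norm_nonneg _)]
    rw [h4, Real.sqrt_sq (by positivity)]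
  have hdabs : ‖d‖ ≤ N := by
    have h5 : d = (1 - E) * C j := by rw [hd]; ring
    rw [h5, norm_mul, habs1E, hN]
    nlinarith [hrmax, abs_nonneg (Real.sin (α / 2))]
  set g := -2 * r * Real.sin (α / 2) * Real.sin (θ + α / 2 - φ) with hgdef
  have hdw : d * (starRingEnd ℂ) w =
      ((r * R : ℝ) : ℂ) * (Complex.exp (((φ - θ - α : ℝ)) * Complex.I) -
        Complex.exp (((φ - θ : ℝ)) * Complex.I)) := by
    rw [hd, hw, hz, hC, hE]
    simp only [map_mul, Complex.conj_ofReal]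
    rw [show (starRingEnd ℂ) (Complex.exp (↑α * Complex.I)) = Complex.exp (-(↑α * Complex.I)) by
        rw [← Complex.exp_conj]; simp,
      show (starRingEnd ℂ) (Complex.exp (↑θ * Complex.I)) = Complex.exp (-(↑θ * Complex.I)) by
        rw [← Complex.exp_conj]; simp,
      show ((φ - θ - α : ℝ) : ℂ) * Complex.I =
          ↑φ * Complex.I + -(↑θ * Complex.I) + -(↑α * Complex.I) by push_cast; ring,
      show ((φ - θ : ℝ) : ℂ) * Complex.I = ↑φ * Complex.I + -(↑θ * Complex.I) by
        push_cast; ring]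
    simp only [Complex.exp_add, Complex.exp_neg, Complex.ofReal_mul]
    have h6 : Complex.exp (↑α * Complex.I) ≠ 0 := Complex.exp_ne_zero _
    have h7 : Complex.exp (↑θ * Complex.I) ≠ 0 := Complex.exp_ne_zero _
    field_simp
  have hgre : (d * (starRingEnd ℂ) w).re = R * g := by
    have h8 : (d * (starRingEnd ℂ) w).re =
        r * R * (Real.cos (φ - θ - α) - Real.cos (φ - θ)) := by
      rw [hdw, Complex.re_ofReal_mul, Complex.sub_re, Complex.exp_ofReal_mul_I_re,
        Complex.exp_ofReal_mul_I_re]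
    have trig : Real.cos (φ - θ - α) - Real.cos (φ - θ) =
        -2 * Real.sin (α / 2) * Real.sin (θ + α / 2 - φ) := by
      have e1 : φ - θ - α = (φ - θ - α / 2) - α / 2 := by ring
      have e2 : φ - θ = (φ - θ - α / 2) + α / 2 := by ring
      have e3 : θ + α / 2 - φ = -(φ - θ - α / 2) := by ring
      rw [e1, e2, e3, Real.cos_sub, Real.cos_add, Real.sin_neg]
      ring
    rw [h8, trig, hgdef]; ring
  rw [hTz, hzabs]
  exact key_est w d R N g hwabs hdabs hR hN0 hgre
end

section
/- Let T(z) = e^{iα}(z − C_j) + C_j for z ∈ P_j with N = 2|sin(α/2)| max(|C₀|,|C₁|). For z ∈ ℂ with |z| > N and z ≠ 0, T(z) ≠ 0, the arguments θ = arg z and θ₁ = arg T(z) satisfy the angular estimate: the distance on the circle between θ₁ and θ + α is at most N / (|z| − N). -/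
open Complex

theorem stmt_6 (α : ℝ) (C : Fin 2 → ℂ) (P : Fin 2 → Set ℂ) (T : ℂ → ℂ)
    (hdisj : Disjoint (P 0) (P 1)) (hcover : P 0 ∪ P 1 = Set.univ)
    (hT : ∀ (j : Fin 2), ∀ z ∈ P j, T z = Complex.exp (α * Complex.I) * (z - C j) + C j)
    (N : ℝ) (hN : N = 2 * |Real.sin (α / 2)| * max ‖C 0‖ ‖C 1‖)
    (z : ℂ) (hz : N < ‖z‖) (hz0 : z ≠ 0) (hTz0 : T z ≠ 0) :
    |Real.Angle.toReal ((Complex.arg (T z) : Real.Angle) -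
        ((Complex.arg z + α : ℝ) : Real.Angle))| ≤ N / (‖z‖ - N) := by
  have hπ := Real.pi_pos
  have hNnn : 0 ≤ N := by
    rw [hN]; positivity
  have hzpos : 0 < ‖z‖ := lt_of_le_of_lt hNnn hz
  -- find the piece containing z
  obtain ⟨j, hj⟩ : ∃ j, z ∈ P j := by
    have : z ∈ P 0 ∪ P 1 := by rw [hcover]; trivial
    rcases this with h | h
    exacts [⟨0, h⟩, ⟨1, h⟩]
  set E : ℂ := Complex.exp (α * Complex.I) with hEdef
  have hE0 : E ≠ 0 := Complex.exp_ne_zero _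
  set c : ℂ := (1 - E) * C j with hcdef
  have hTz : T z = E * z + c := by
    rw [hT j z hj]; ring
  -- |1 - E| = 2|sin(α/2)|
  have habsE : ‖1 - E‖ = 2 * |Real.sin (α / 2)| := by
    have h1 : (1 : ℂ) - E = ((1 - Real.cos α : ℝ) : ℂ) + ((-Real.sin α : ℝ) : ℂ) * Complex.I := by
      rw [hEdef, Complex.exp_mul_I, Complex.ofReal_sub, Complex.ofReal_neg,
        Complex.ofReal_cos, Complex.ofReal_sin, Complex.ofReal_one]
      ring
    have hhalf : Real.sin (α / 2) ^ 2 = 1 / 2 - Real.cos α / 2 := by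
      have h := Real.sin_sq_eq_half_sub (α / 2)
      rwa [show 2 * (α / 2) = α by ring] at h
    have hc := Real.sin_sq_add_cos_sq α
    have hsq : ‖1 - E‖ ^ 2 = (2 * |Real.sin (α / 2)|) ^ 2 := by
      rw [← Complex.normSq_eq_norm_sq, h1, Complex.normSq_add_mul_I, mul_pow, _root_.sq_abs]
      nlinarith [hhalf, hc]
    have h2 : 0 ≤ ‖1 - E‖ := norm_nonneg _
    have h3 : (0:ℝ) ≤ 2 * |Real.sin (α / 2)| := by positivity
    rw [← Real.sqrt_sq h2, ← Real.sqrt_sq h3, hsq]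
  have hcN : ‖c‖ ≤ N := by
    rw [hcdef, norm_mul, habsE, hN]
    gcongr
    fin_cases j
    · exact le_max_left _ _
    · exact le_max_right _ _
  set u : ℂ := E * z with hudef
  have hu0 : u ≠ 0 := mul_ne_zero hE0 hz0
  have habsu : ‖u‖ = ‖z‖ := by
    rw [hudef, norm_mul, hEdef, Complex.norm_exp_ofReal_mul_I, one_mul]
  set w : ℂ := c / u with hwdef
  have habsw : ‖w‖ ≤ N / ‖z‖ := by
    rw [hwdef, norm_div, habsu]
    gcongr
  have hwlt1 : ‖w‖ < 1 := by
    refine lt_of_le_of_lt habsw ?_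
    rw [div_lt_one hzpos]; exact hz
  have hTzu : T z = u * (1 + w) := by
    rw [hwdef, mul_add, mul_one, mul_div_cancel₀ _ hu0, hTz]
  have h1w0 : (1 : ℂ) + w ≠ 0 := by
    intro h
    rw [h, mul_zero] at hTzu
    exact hTz0 hTzu
  -- real part of 1+w is positive
  have hwre : |w.re| ≤ ‖w‖ := Complex.abs_re_le_norm w
  have hwim : |w.im| ≤ ‖w‖ := Complex.abs_im_le_norm w
  have hrepos : 0 < (1 + w).re := by
    simp only [Complex.add_re, Complex.one_re]
    have := abs_le.mp hwre
    linarith [this.1]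
  -- angle identity
  have hangle : ((Complex.arg (T z) : Real.Angle) - ((Complex.arg z + α : ℝ) : Real.Angle))
      = (Complex.arg (1 + w) : Real.Angle) := by
    have hargE : (Complex.arg E : Real.Angle) = (α : Real.Angle) := by
      have := Complex.arg_cos_add_sin_mul_I_coe_angle (α : Real.Angle)
      rw [Real.Angle.cos_coe, Real.Angle.sin_coe] at this
      rw [Complex.ofReal_cos, Complex.ofReal_sin] at this
      rw [hEdef, Complex.exp_mul_I]
      exact this
    rw [hTzu, Complex.arg_mul_coe_angle hu0 h1w0, hudef,
      Complex.arg_mul_coe_angle hE0 hz0, hargE, Real.Angle.coe_add]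
    abel
  rw [hangle, Complex.arg_coe_angle_toReal_eq_arg]
  -- now bound |arg (1+w)|
  set θ : ℝ := Complex.arg (1 + w) with hθdef
  have hθlt : |θ| < Real.pi / 2 :=
    Complex.abs_arg_lt_pi_div_two_iff.mpr (Or.inl hrepos)
  have hrhs : |w.im| / (1 + w.re) ≤ N / (‖z‖ - N) := by
    have h1 : |w.im| ≤ N / ‖z‖ := le_trans hwim habsw
    have h2 : 1 - N / ‖z‖ ≤ 1 + w.re := by
      have := (abs_le.mp hwre).1
      have h3 : -(N / ‖z‖) ≤ w.re := le_trans (neg_le_neg habsw) this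
      linarith
    have h4 : 0 < 1 - N / ‖z‖ := by
      rw [sub_pos, div_lt_one hzpos]; exact hz
    have h5 : |w.im| / (1 + w.re) ≤ (N / ‖z‖) / (1 - N / ‖z‖) :=
      div_le_div₀ (by positivity) h1 h4 h2
    refine le_trans h5 (le_of_eq ?_)
    have hA : ‖z‖ ≠ 0 := hzpos.ne'
    have hAN : ‖z‖ - N ≠ 0 := by intro h; linarith
    field_simp
  have htan : Real.tan θ = w.im / (1 + w.re) := by
    rw [hθdef, Complex.tan_arg]
    simp [Complex.add_re, Complex.add_im]
  rcases eq_or_lt_of_le (abs_nonneg θ) with h0 | h0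
  · rw [← h0]
    apply div_nonneg hNnn
    linarith
  · have hlt : |θ| < Real.tan |θ| := Real.lt_tan h0 hθlt
    have hlt2 : θ < Real.pi / 2 := (abs_lt.mp hθlt).2
    have hlt1 : -(Real.pi / 2) < θ := (abs_lt.mp hθlt).1
    have htanabs : Real.tan |θ| = |Real.tan θ| := by
      rcases le_or_gt 0 θ with hθ | hθ
      · rw [_root_.abs_of_nonneg hθ,
          _root_.abs_of_nonneg (Real.tan_nonneg_of_nonneg_of_le_pi_div_two hθ hlt2.le)]
      · rw [_root_.abs_of_neg hθ, Real.tan_neg,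
          _root_.abs_of_nonpos (Real.tan_nonpos_of_nonpos_of_neg_pi_div_two_le hθ.le hlt1.le)]
    have hre' : 0 < 1 + w.re := by simpa using hrepos
    have : |Real.tan θ| = |w.im| / (1 + w.re) := by
      rw [htan, abs_div, _root_.abs_of_pos hre']
    calc |θ| ≤ Real.tan |θ| := le_of_lt hlt
      _ = |w.im| / (1 + w.re) := by rw [htanabs, this]
      _ ≤ N / (‖z‖ - N) := hrhs
end

section
/- For all z ∈ ℂ with |z| > N (where N = 2|sin(α/2)| max(|C₀|,|C₁|)) and with T a piecewise rotation of angle α and centers C₀, C₁, one has |T(z)e^{−iα}/z − 1| ≤ N/|z|, and consequently Re(T(z)e^{−iα}/z) ≥ 1 − N/|z| and |Im(T(z)e^{−iα}/z)| ≤ N/|z|. -/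
open Complex

lemma aux_abs_exp_sub_one (θ : ℝ) :
    ‖Complex.exp (θ * Complex.I) - 1‖ = 2 * |Real.sin (θ / 2)| := by
  have h1 : ‖Complex.exp (θ * Complex.I) - 1‖
      = Real.sqrt ((Real.cos θ - 1)^2 + (Real.sin θ)^2) := by
    have heq : Complex.exp (θ * Complex.I) - 1
        = ((Real.cos θ - 1 : ℝ) : ℂ) + ((Real.sin θ : ℝ) : ℂ) * Complex.I := by
      rw [Complex.exp_mul_I, ← Complex.ofReal_cos, ← Complex.ofReal_sin]
      push_cast
      ring
    rw [heq, Complex.norm_add_mul_I]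
  have h2 : (Real.cos θ - 1)^2 + (Real.sin θ)^2 = (2 * |Real.sin (θ / 2)|)^2 := by
    have hc : Real.cos θ = 1 - 2 * Real.sin (θ / 2) ^ 2 := by
      have h3 := Real.cos_sq (θ / 2)
      rw [show 2 * (θ / 2) = θ by ring] at h3
      have h2' := Real.sin_sq_add_cos_sq (θ / 2)
      linarith
    have hs := Real.sin_sq_add_cos_sq θ
    have hsa := _root_.sq_abs (Real.sin (θ / 2))
    nlinarith
  rw [h1, h2, Real.sqrt_sq (by positivity)]

theorem stmt_7 (α : ℝ) (C : Fin 2 → ℂ) (P : Fin 2 → Set ℂ) (T : ℂ → ℂ)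
    (hdisj : Disjoint (P 0) (P 1)) (hcover : P 0 ∪ P 1 = Set.univ)
    (hT : ∀ (j : Fin 2), ∀ z ∈ P j, T z = Complex.exp (α * Complex.I) * (z - C j) + C j)
    (N : ℝ) (hN : N = 2 * |Real.sin (α / 2)| * max ‖C 0‖ ‖C 1‖)
    (z : ℂ) (hz : N < ‖z‖) :
    ‖T z * Complex.exp (-(α : ℂ) * Complex.I) / z - 1‖ ≤ N / ‖z‖ ∧
    1 - N / ‖z‖ ≤ (T z * Complex.exp (-(α : ℂ) * Complex.I) / z).re ∧
    |(T z * Complex.exp (-(α : ℂ) * Complex.I) / z).im| ≤ N / ‖z‖ := by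
  have hN0 : 0 ≤ N := by rw [hN]; positivity
  have hzpos : 0 < ‖z‖ := lt_of_le_of_lt hN0 hz
  have hzne : z ≠ 0 := by
    intro h; rw [h] at hzpos; simp at hzpos
  set w := T z * Complex.exp (-(α : ℂ) * Complex.I) / z with hw
  have habs : ‖w - 1‖ ≤ N / ‖z‖ := by
    obtain hj | hj : z ∈ P 0 ∨ z ∈ P 1 := by
      have : z ∈ P 0 ∪ P 1 := by rw [hcover]; trivial
      exact this
    all_goals {
      first
      | (have hTz := hT 0 z hj
         have hCle : ‖C 0‖ ≤ max ‖C 0‖ ‖C 1‖ :=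
           le_max_left _ _
         set c := C 0 with hc)
      | (have hTz := hT 1 z hj
         have hCle : ‖C 1‖ ≤ max ‖C 0‖ ‖C 1‖ :=
           le_max_right _ _
         set c := C 1 with hc)
      have key : w - 1 = (Complex.exp (-(α : ℂ) * Complex.I) - 1) * c / z := by
        rw [hw, hTz, show -(α : ℂ) * Complex.I = -((α : ℂ) * Complex.I) by ring]
        have hee : Complex.exp ((α : ℂ) * Complex.I) * Complex.exp (-((α : ℂ) * Complex.I)) = 1 := by
          rw [← Complex.exp_add, add_neg_cancel, Complex.exp_zero]
        field_simp
        linear_combination (z - c) * hee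
      rw [key, norm_div, norm_mul]
      have he : ‖Complex.exp (-(α : ℂ) * Complex.I) - 1‖ = 2 * |Real.sin (α / 2)| := by
        have h4 := aux_abs_exp_sub_one (-α)
        rw [show ((-α : ℝ) : ℂ) = -(α : ℂ) by push_cast; ring] at h4
        rw [h4, show (-α) / 2 = -(α / 2) by ring, Real.sin_neg, abs_neg]
      rw [he, hN]
      gcongr
    }
  refine ⟨habs, ?_, ?_⟩
  · have := (Complex.abs_re_le_norm (w - 1)).trans habs
    have h5 : (w - 1).re = w.re - 1 := by simp
    rw [h5] at this
    have := abs_le.mp this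
    linarith [this.1]
  · have := (Complex.abs_im_le_norm (w - 1)).trans habs
    have h5 : (w - 1).im = w.im := by simp
    rwa [h5] at this
end

section
/- For the piecewise rotation T with line of discontinuity D parametrized by z₀ and angle γ, rotation angle α, and centers C₀, C₁: for every z ∈ D, the scalar product ⟨r₁(z − ie^{iγ}) − r₁(z), r₀(z) − r₁(z)⟩ equals Δ = −2|C₁ − C₀| sin(α/2) cos(γ + α/2 − β), where β = arg(C₁ − C₀) and r_j(w) = e^{iα}(w − C_j) + C_j. In particular this value is independent of z ∈ D. -/
/-- Scalar product of two complex numbers, `⟨u, v⟩ = Re (u * conj v)`. -/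
noncomputable def scal (u v : ℂ) : ℝ := (u * (starRingEnd ℂ) v).re

theorem stmt_11 (α γ β Δ : ℝ) (z₀ : ℂ) (C : Fin 2 → ℂ) (hC : C 0 ≠ C 1)
    (r : Fin 2 → ℂ → ℂ)
    (hr : ∀ j w, r j w = Complex.exp (α * Complex.I) * (w - C j) + C j)
    (hβ : β = Complex.arg (C 1 - C 0))
    (hΔ : Δ = -2 * ‖C 1 - C 0‖ * Real.sin (α / 2) * Real.cos (γ + α / 2 - β)) :
    ∀ t : ℝ,
      scal (r 1 ((z₀ + t * Complex.exp (γ * Complex.I)) - Complex.I * Complex.exp (γ * Complex.I))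
              - r 1 (z₀ + t * Complex.exp (γ * Complex.I)))
           (r 0 (z₀ + t * Complex.exp (γ * Complex.I))
              - r 1 (z₀ + t * Complex.exp (γ * Complex.I))) = Δ := by
  intro t
  set R : ℝ := ‖C 1 - C 0‖ with hR
  have hw : C 1 - C 0 = (R : ℂ) * Complex.exp (β * Complex.I) := by
    rw [hR, hβ]; exact (Complex.norm_mul_exp_arg_mul_I _).symm
  set z : ℂ := z₀ + t * Complex.exp (γ * Complex.I) with hz
  have hu : r 1 (z - Complex.I * Complex.exp (γ * Complex.I)) - r 1 z
      = Complex.exp (α * Complex.I) * (-(Complex.I) * Complex.exp (γ * Complex.I)) := by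
    rw [hr, hr]; ring
  have hv : r 0 z - r 1 z
      = (Complex.exp (α * Complex.I) - 1) * ((R : ℂ) * Complex.exp (β * Complex.I)) := by
    rw [hr, hr, ← hw]; ring
  rw [scal, hu, hv]
  have hconj : (starRingEnd ℂ) ((Complex.exp (α * Complex.I) - 1) *
      ((R : ℂ) * Complex.exp (β * Complex.I)))
      = (Complex.exp (-(α * Complex.I)) - 1) * ((R : ℂ) * Complex.exp (-(β * Complex.I))) := by
    simp [map_mul, map_sub, ← Complex.exp_conj, Complex.conj_I, Complex.conj_ofReal, mul_comm]
  rw [hconj]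
  have hone : Complex.exp (α * Complex.I) * Complex.exp (-(α * Complex.I)) = 1 := by
    rw [← Complex.exp_add]; simp
  have hmul : Complex.exp (α * Complex.I) * (-(Complex.I) * Complex.exp (γ * Complex.I)) *
      ((Complex.exp (-(α * Complex.I)) - 1) * ((R : ℂ) * Complex.exp (-(β * Complex.I))))
      = (R : ℂ) * (-(Complex.I)) *
        (Complex.exp (γ * Complex.I) * Complex.exp (-(β * Complex.I))
          - Complex.exp (α * Complex.I) * Complex.exp (γ * Complex.I) *
            Complex.exp (-(β * Complex.I))) := by
    linear_combination (-(Complex.I) * Complex.exp (γ * Complex.I) * (R : ℂ) *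
      Complex.exp (-(β * Complex.I))) * hone
  rw [hmul]
  have hre : ((R : ℂ) * (-(Complex.I)) *
      (Complex.exp (γ * Complex.I) * Complex.exp (-(β * Complex.I))
        - Complex.exp (α * Complex.I) * Complex.exp (γ * Complex.I) *
          Complex.exp (-(β * Complex.I)))).re
      = R * (Real.sin (γ - β) - Real.sin (α + γ - β)) := by
    rw [← Complex.exp_add, ← Complex.exp_add, ← Complex.exp_add]
    have e1 : γ * Complex.I + -(β * Complex.I) = ((γ - β : ℝ) : ℂ) * Complex.I := by
      push_cast; ring
    have e2 : α * Complex.I + γ * Complex.I + -(β * Complex.I)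
        = ((α + γ - β : ℝ) : ℂ) * Complex.I := by push_cast; ring
    rw [e1, e2, Complex.exp_mul_I, Complex.exp_mul_I, ← Complex.ofReal_cos,
      ← Complex.ofReal_sin, ← Complex.ofReal_cos, ← Complex.ofReal_sin]
    simp [Complex.mul_re, Complex.mul_im, Complex.sub_re, Complex.sub_im,
      ← Complex.ofReal_sub, ← Complex.ofReal_add, Complex.cos_ofReal_re,
      Complex.cos_ofReal_im, Complex.sin_ofReal_re, Complex.sin_ofReal_im]
  rw [hre, hΔ, Real.sin_sub_sin,
    show (γ - β - (α + γ - β)) / 2 = -(α / 2) by ring,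
    show (γ - β + (α + γ - β)) / 2 = γ + α / 2 - β by ring, Real.sin_neg]
  ring
end

section
/- Let q > 2 be an even integer, p coprime to q, and k ∈ {0,…,q−1}. Define η(m) = 0 if (m mod q) < q/2 and η(m) = 1 otherwise, and let α = 2πp/q. Then Σ_{n=0}^{q−1} C_{η(k+np)} e^{−iα(n+1)} = e^{2πi(k−p)/q} (C₀ − C₁) · 2/(1 − e^{−2πi/q}) for any C₀, C₁ ∈ ℂ. -/
open Finset

/-- `η m = 0` if `m mod q < q/2`, and `η m = 1` otherwise. -/
def eta (q : ℕ) (m : ℕ) : Fin 2 := if m % q < q / 2 then 0 else 1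

lemma sum_range_zmod (q : ℕ) [NeZero q] (g : ZMod q → ℂ) :
    ∑ n ∈ Finset.range q, g n = ∑ x : ZMod q, g x := by
  refine Finset.sum_nbij' (fun n => (n : ZMod q)) (fun x => x.val) ?_ ?_ ?_ ?_ ?_
  · intros; exact Finset.mem_univ _
  · intro x _; exact Finset.mem_range.mpr (ZMod.val_lt x)
  · intro n hn; exact ZMod.val_natCast_of_lt (Finset.mem_range.mp hn)
  · intro x _; exact ZMod.natCast_zmod_val x
  · intros; rfl

lemma reindex (q p k : ℕ) [NeZero q] (hpq : Nat.Coprime p q) (f : ℕ → ℂ) :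
    ∑ n ∈ Finset.range q, f ((k + n * p) % q) = ∑ m ∈ Finset.range q, f m := by
  have h1 : ∀ n : ℕ, (k + n * p) % q = (((k : ZMod q) + n * p).val) := by
    intro n
    rw [← ZMod.val_natCast]
    push_cast
    ring_nf
  calc ∑ n ∈ Finset.range q, f ((k + n * p) % q)
      = ∑ x : ZMod q, f (((k : ZMod q) + x * p).val) := by
        rw [← sum_range_zmod q (fun x => f (((k : ZMod q) + x * p).val))]
        exact Finset.sum_congr rfl fun n _ => by rw [h1]
    _ = ∑ y : ZMod q, f y.val := by
        apply Fintype.sum_bijective (fun x : ZMod q => (k : ZMod q) + x * p)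
        · have hu : IsUnit (p : ZMod q) :=
            (ZMod.unitOfCoprime p hpq).isUnit
          have : Function.Bijective (fun x : ZMod q => x * (p : ZMod q)) := by
            refine Finite.injective_iff_bijective.mp ?_
            intro a b hab
            exact hu.mul_left_cancel (by simpa [mul_comm] using hab)
          have hadd : Function.Bijective (fun x : ZMod q => (k : ZMod q) + x) :=
            Finite.injective_iff_bijective.mp (add_right_injective _)
          exact hadd.comp this
        · intro x; rfl
    _ = ∑ m ∈ Finset.range q, f m := by
        rw [← sum_range_zmod q (fun y => f y.val)]
        exact Finset.sum_congr rfl fun n hn => by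
          rw [ZMod.val_natCast_of_lt (Finset.mem_range.mp hn)]

theorem stmt_12 (q p k : ℕ) (hq2 : 2 < q) (hqeven : Even q) (hpq : Nat.Coprime p q)
    (hk : k < q) (α : ℝ) (hα : α = 2 * Real.pi * p / q) (C : Fin 2 → ℂ) :
    (∑ n ∈ Finset.range q,
        C (eta q (k + n * p)) * Complex.exp (-(α : ℂ) * (n + 1) * Complex.I)) =
      Complex.exp ((2 * Real.pi * ((k : ℝ) - p) / q) * Complex.I) * (C 0 - C 1) *
        (2 / (1 - Complex.exp (-(2 * Real.pi / q) * Complex.I))) := by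
  haveI : NeZero q := ⟨by omega⟩
  have hq0 : (q : ℂ) ≠ 0 := by exact_mod_cast (by omega : q ≠ 0)
  set ω : ℂ := Complex.exp (-(2 * Real.pi / q) * Complex.I) with hωdef
  obtain ⟨t, ht⟩ := hqeven
  have htq : q = 2 * t := by omega
  have ht2 : q / 2 = t := by omega
  have ht0 : (t : ℂ) ≠ 0 := by exact_mod_cast (by omega : t ≠ 0)
  have hω0 : ω ≠ 0 := Complex.exp_ne_zero _
  have hωq : ω ^ q = 1 := by
    rw [hωdef, ← Complex.exp_nat_mul]
    have : (q : ℂ) * (-(2 * Real.pi / q) * Complex.I) = (-1 : ℤ) * (2 * Real.pi * Complex.I) := by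
      push_cast; field_simp
    rw [this, Complex.exp_int_mul_two_pi_mul_I]
  have hω1 : ω ≠ 1 := by
    intro h
    obtain ⟨n, hn⟩ := Complex.exp_eq_one_iff.mp h
    have hI : -(2 * (Real.pi : ℂ) / q) = n * (2 * Real.pi) := by
      refine mul_right_cancel₀ Complex.I_ne_zero ?_
      rw [hn]; ring
    have hre : -(2 * Real.pi / q) = (n : ℝ) * (2 * Real.pi) := by
      have := congrArg Complex.re hI
      push_cast at this
      simpa using this
    have hπ := Real.pi_pos
    have hqR : (0:ℝ) < q := by exact_mod_cast (by omega : 0 < q)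
    have h1 : (n : ℝ) * q = -1 := by
      field_simp at hre
      nlinarith [hre]
    have hZ : n * (q : ℤ) = -1 := by exact_mod_cast h1
    have hdvd : (q : ℤ) ∣ 1 := ⟨-n, by linarith⟩
    have := Int.eq_one_of_dvd_one (by positivity) hdvd
    omega
  have hzpow : ∀ a b : ℤ, a ≡ b [ZMOD q] → ω ^ a = ω ^ b := by
    intro a b hab
    obtain ⟨c, hc⟩ := Int.ModEq.dvd hab
    have hb : b = a + q * c := by linarith
    rw [hb, zpow_add₀ hω0, zpow_mul, zpow_natCast, hωq, one_zpow, mul_one]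
  have hmod : ∀ a : ℤ, a % q ≡ a [ZMOD q] := fun a => Int.emod_emod_of_dvd a dvd_rfl
  have hterm : ∀ n : ℕ, Complex.exp (-(α : ℂ) * (n + 1) * Complex.I)
      = ω ^ ((p : ℤ) * (n + 1)) := by
    intro n
    rw [hωdef, ← Complex.exp_int_mul]
    congr 1
    subst hα
    push_cast
    field_simp
  have hterm2 : ∀ n : ℕ, C (eta q (k + n * p)) * Complex.exp (-(α : ℂ) * (n + 1) * Complex.I)
      = (fun m : ℕ => C (eta q m) * ω ^ ((m : ℤ) - k + p)) ((k + n * p) % q) := by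
    intro n
    simp only
    rw [hterm]
    congr 1
    · unfold eta
      rw [Nat.mod_mod_of_dvd _ dvd_rfl]
    · apply hzpow
      calc ((p : ℤ) * (n + 1)) = ((k + n * p : ℕ) : ℤ) - k + p := by push_cast; ring
        _ ≡ (((k + n * p : ℕ) : ℤ) % q) - k + p [ZMOD q] :=
            (((hmod _).symm.sub_right _).add_right _)
        _ = (((k + n * p) % q : ℕ) : ℤ) - k + p := by push_cast; ring
  rw [Finset.sum_congr rfl (fun n _ => hterm2 n),
    reindex q p k hpq (fun m => C (eta q m) * ω ^ ((m : ℤ) - k + p))]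
  have hfac : ∀ m ∈ Finset.range q, C (eta q m) * ω ^ ((m:ℤ) - k + p)
      = ω ^ ((p:ℤ) - k) * (C (eta q m) * ω ^ m) := by
    intro m _
    rw [show ((m:ℤ) - k + p) = ((p:ℤ) - k) + m by ring, zpow_add₀ hω0, zpow_natCast]
    ring
  rw [Finset.sum_congr rfl hfac, ← Finset.mul_sum]
  have hsplit : ∀ m ∈ Finset.range q, C (eta q m) * ω ^ m
      = C 1 * ω ^ m + (if m < q / 2 then (C 0 - C 1) * ω ^ m else 0) := by
    intro m hm
    have hmq : m % q = m := Nat.mod_eq_of_lt (Finset.mem_range.mp hm)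
    unfold eta
    rw [hmq]
    by_cases h : m < q / 2 <;> simp [h] <;> ring
  rw [Finset.sum_congr rfl hsplit, Finset.sum_add_distrib]
  have hgeom0 : ∑ m ∈ Finset.range q, C 1 * ω ^ m = 0 := by
    rw [← Finset.mul_sum, geom_sum_eq hω1, hωq]
    simp
  have hfilter : (∑ m ∈ Finset.range q, if m < q / 2 then (C 0 - C 1) * ω ^ m else 0)
      = ∑ m ∈ Finset.range (q/2), (C 0 - C 1) * ω ^ m := by
    rw [← Finset.sum_filter]
    congr 1
    ext a
    simp only [Finset.mem_filter, Finset.mem_range]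
    omega
  have hhalf : ω ^ (q/2) = -1 := by
    rw [ht2, hωdef, ← Complex.exp_nat_mul]
    have he : (t:ℂ) * (-(2 * Real.pi / q) * Complex.I) = -(Real.pi * Complex.I) := by
      rw [htq]
      have ht0' : (2 * t : ℂ) ≠ 0 := by push_cast; simpa using ht0
      push_cast
      field_simp
    rw [he, Complex.exp_neg, Complex.exp_pi_mul_I]
    norm_num
  have h1ω : (1 : ℂ) - ω ≠ 0 := fun h => hω1 (by linear_combination -h)
  have hω1' : ω - 1 ≠ 0 := sub_ne_zero.mpr hω1
  have hgeom1 : ∑ m ∈ Finset.range (q/2), ω ^ m = 2 / (1 - ω) := by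
    rw [geom_sum_eq hω1, hhalf]
    rw [div_eq_div_iff hω1' h1ω]
    ring
  have hexp : Complex.exp (2 * (Real.pi:ℂ) * (((k:ℝ):ℂ) - (p:ℕ)) / (q:ℕ) * Complex.I)
      = ω ^ ((p:ℤ) - k) := by
    rw [hωdef, ← Complex.exp_int_mul]
    congr 1
    push_cast
    field_simp
    ring
  rw [hgeom0, hfilter, ← Finset.mul_sum, hgeom1, hexp]
  ring
end
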